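/- For N ≥ 2 and β ∈ (1/(2N-1), 1/N), the difference set Γ_{β,N} − Γ_{β,N} equals the interval [−1,1]; equivalently, every t ∈ [−1,1] can be written as Σ_{ℓ=1}^∞ t_ℓ β^{ℓ-1}(1−β)/(N−1) with digits t_ℓ ∈ {0, ±1, …, ±(N−1)}. -/

import Mathlib

noncomputable def dig (M : ℤ) (u x : ℝ) : ℤ := max (-M) (min M (round (x / u)))

lemma dig_abs_le {M : ℤ} (hM : 0 ≤ M) (u x : ℝ) : |dig M u x| ≤ M := by
  rw [abs_le]
  refine ⟨le_max_left _ _, max_le ((neg_nonpos.mpr hM).trans hM) (min_le_left _ _)⟩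

lemma dig_err {M : ℤ} (hM : 0 ≤ M) {u ε x : ℝ} (hu : 0 < u) (hε : u ≤ 2 * ε)
    (hx : |x| ≤ (M : ℝ) * u + ε) : |x - (dig M u x : ℝ) * u| ≤ ε := by
  have hM' : (0:ℝ) ≤ (M:ℝ) := by exact_mod_cast hM
  set q := round (x / u) with hq
  have hround : |x / u - (q:ℝ)| ≤ 1 / 2 := abs_sub_round _
  rw [abs_le] at hround hx
  obtain ⟨hr1, hr2⟩ := hround
  obtain ⟨hx1, hx2⟩ := hx
  have heq : x - (q:ℝ) * u = (x / u - q) * u := by field_simp; try ring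
  have key1 : -(u/2) ≤ x - (q:ℝ)*u := by rw [heq]; nlinarith
  have key2 : x - (q:ℝ)*u ≤ u/2 := by rw [heq]; nlinarith
  rcases le_total q (-M) with h | h
  · have hd : dig M u x = -M := by
      have hqM : q ≤ M := h.trans ((neg_nonpos.mpr hM).trans hM)
      rw [dig, ← hq, min_eq_right hqM, max_eq_left h]
    have hqr : (q:ℝ) ≤ -(M:ℝ) := by exact_mod_cast h
    rw [hd, abs_le]
    push_cast
    constructor <;> nlinarith
  rcases le_total M q with h' | h'
  · have hd : dig M u x = M := by
      rw [dig, ← hq, min_eq_left h', max_eq_right (neg_le_self hM)]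
    have hqr : (M:ℝ) ≤ (q:ℝ) := by exact_mod_cast h'
    rw [hd, abs_le]
    constructor <;> nlinarith
  · have hd : dig M u x = q := by
      rw [dig, ← hq, min_eq_right h', max_eq_right h]
    rw [hd, abs_le]
    constructor <;> nlinarith

noncomputable def rem (M : ℤ) (β s t : ℝ) : ℕ → ℝ
  | 0 => t
  | n + 1 => rem M β s t n - (dig M (β ^ n * s) (rem M β s t n) : ℝ) * (β ^ n * s)

theorem stmt1 (N : ℕ) (hN : 2 ≤ N) (β : ℝ)
    (h1 : 1 / (2 * (N : ℝ) - 1) < β) (h2 : β < 1 / (N : ℝ))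
    (t : ℝ) (ht : t ∈ Set.Icc (-1 : ℝ) 1) :
    ∃ c : ℕ → ℤ, (∀ n, |c n| ≤ (N : ℤ) - 1) ∧
      t = ∑' n, (c n : ℝ) * β ^ n * (1 - β) / ((N : ℝ) - 1) := by
  have hN' : (2:ℝ) ≤ (N:ℝ) := by exact_mod_cast hN
  have hNpos : (0:ℝ) < (N:ℝ) - 1 := by linarith
  have hβ0 : 0 < β := lt_trans (div_pos one_pos (by linarith)) h1
  have hβ1 : β < 1 := lt_of_lt_of_le h2 (by rw [div_le_one (by linarith)]; linarith)
  set M : ℤ := (N : ℤ) - 1 with hM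
  have hM0 : 0 ≤ M := by omega
  have hMr : (M : ℝ) = (N : ℝ) - 1 := by push_cast [hM]; ring
  set s : ℝ := (1 - β) / ((N : ℝ) - 1) with hs
  have hs0 : 0 < s := by apply div_pos <;> linarith
  have hMs : (M : ℝ) * s = 1 - β := by rw [hMr, hs]; field_simp
  have hs2β : s ≤ 2 * β := by
    rw [hs, div_le_iff₀ hNpos]
    have h1' : 1 / (2 * (N : ℝ) - 1) < β := h1
    rw [div_lt_iff₀ (by linarith)] at h1'
    nlinarith
  set c : ℕ → ℤ := fun n => dig M (β ^ n * s) (rem M β s t n) with hc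
  have hrec : ∀ n, rem M β s t (n+1) = rem M β s t n - (c n : ℝ) * (β ^ n * s) :=
    fun n => rfl
  have hinv : ∀ n, |rem M β s t n| ≤ β ^ n := by
    intro n
    induction n with
    | zero => simpa [rem] using abs_le.mpr ⟨ht.1, ht.2⟩
    | succ n ih =>
      rw [hrec n]
      have hu : 0 < β ^ n * s := by positivity
      have hε : β ^ n * s ≤ 2 * β ^ (n+1) := by
        have := mul_le_mul_of_nonneg_left hs2β (pow_nonneg hβ0.le n)
        calc β ^ n * s ≤ β ^ n * (2 * β) := this
          _ = 2 * β ^ (n+1) := by ring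
      have hx : |rem M β s t n| ≤ (M : ℝ) * (β ^ n * s) + β ^ (n+1) := by
        have : (M : ℝ) * (β ^ n * s) + β ^ (n+1) = β ^ n := by
          rw [show (M:ℝ) * (β ^ n * s) = β ^ n * ((M:ℝ) * s) by ring, hMs]; ring
        rw [this]; exact ih
      exact dig_err hM0 hu hε hx
  have hpart : ∀ n, ∑ k ∈ Finset.range n, (c k : ℝ) * (β ^ k * s) = t - rem M β s t n := by
    intro n
    induction n with
    | zero => simp [rem]
    | succ n ih => rw [Finset.sum_range_succ, ih, hrec n]; ring
  refine ⟨c, fun n => by simpa [hM] using dig_abs_le hM0 (β ^ n * s) (rem M β s t n), ?_⟩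
  have hfe : ∀ n, (c n : ℝ) * β ^ n * (1 - β) / ((N : ℝ) - 1) = (c n : ℝ) * (β ^ n * s) := by
    intro n; rw [hs]; field_simp; try ring
  have hsummable : Summable (fun n => (c n : ℝ) * (β ^ n * s)) := by
    apply Summable.of_norm_bounded (g := fun n => ((M:ℝ) * s) * β ^ n)
      ((summable_geometric_of_lt_one hβ0.le hβ1).mul_left _)
    intro n
    have hcb : |(c n : ℝ)| ≤ (M : ℝ) := by exact_mod_cast dig_abs_le hM0 (β ^ n * s) (rem M β s t n)
    rw [Real.norm_eq_abs, abs_mul, abs_mul, abs_of_nonneg (pow_nonneg hβ0.le n),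
      abs_of_nonneg hs0.le]
    calc |(c n : ℝ)| * (β ^ n * s) ≤ (M:ℝ) * (β ^ n * s) := by
          apply mul_le_mul_of_nonneg_right hcb (by positivity)
      _ = (M:ℝ) * s * β ^ n := by ring
  have htend : Filter.Tendsto (fun n => ∑ k ∈ Finset.range n, (c k : ℝ) * (β ^ k * s))
      Filter.atTop (nhds t) := by
    have hr0 : Filter.Tendsto (fun n => rem M β s t n) Filter.atTop (nhds 0) := by
      apply squeeze_zero_norm (fun n => hinv n)
      exact tendsto_pow_atTop_nhds_zero_of_lt_one hβ0.le hβ1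
    have : Filter.Tendsto (fun n => t - rem M β s t n) Filter.atTop (nhds (t - 0)) :=
      tendsto_const_nhds.sub hr0
    simpa [hpart] using this
  have := hsummable.hasSum.tendsto_sum_nat
  have heq := tendsto_nhds_unique this htend
  rw [show (fun n => (c n : ℝ) * β ^ n * (1 - β) / ((N : ℝ) - 1)) = fun n => (c n : ℝ) * (β ^ n * s)
    from funext hfe]
  exact heq.symm
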